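/- For a psh function φ on a complex manifold X and compact K ⊂ X, c_K(φ) = inf_{z ∈ K} c_{{z}}(φ), and the function z ↦ c_{{z}}(φ) is lower semicontinuous on X; in particular, if c_K(φ) ≤ 1 then there exists z_0 ∈ K with c_{{z_0}}(φ) ≤ 1. -/

import Mathlib

set_option synthInstance.maxHeartbeats 1000000
set_option maxHeartbeats 1000000
open Filter MeasureTheory Topology
noncomputable section

abbrev Cn (n : ℕ) := EuclideanSpace ℂ (Fin n)

instance (n : ℕ) : MeasureSpace (Cn n) where
  toMeasurableSpace := inferInstance
  volume := Measure.map (MeasurableEquiv.toLp 2 (Fin n → ℂ))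
    (MeasureTheory.MeasureSpace.pi (α := fun _ : Fin n => ℂ)).volume

/-- Mean value of an `EReal`-valued function over a circle
`θ ↦ a + e^{iθ}·b`, computed as the decreasing limit of the averages of the
truncations `max(φ, -m)`. -/
def circleAvg {n : ℕ} (φ : Cn n → EReal) (a b : Cn n) : EReal :=
  ⨅ m : ℕ,
    (((⨍ θ in Set.Ioc (0 : ℝ) (2 * Real.pi),
      ((φ (a + (Complex.exp (θ * Complex.I)) • b)) ⊔ ((-(m : ℝ) : ℝ) : EReal)).toReal) : ℝ) :
        EReal)

/-- `φ : Ω → [-∞, ∞)` is plurisubharmonic on `Ω`: upper semicontinuous, and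
satisfying the sub-mean value inequality on every complex disc contained in `Ω`. -/
def PshOn {n : ℕ} (φ : Cn n → EReal) (Ω : Set (Cn n)) : Prop :=
  UpperSemicontinuousOn φ Ω ∧ (∀ z ∈ Ω, φ z ≠ ⊤) ∧
  ∀ a ∈ Ω, ∀ b : Cn n, (∀ w : ℂ, ‖w‖ ≤ 1 → a + w • b ∈ Ω) →
    φ a ≤ circleAvg φ a b

/-- The complex Hessian `(∂²φ/∂z_j∂z̄_k)` of a real-valued function on `ℂⁿ`,
expressed through real second-order directional derivatives. -/
def cHessEntry {n : ℕ} (φ : Cn n → ℝ) (z : Cn n) (j k : Fin n) : ℂ :=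
  (1 / 4 : ℂ) *
    (((iteratedFDeriv ℝ 2 φ z ![EuclideanSpace.single j (1 : ℂ), EuclideanSpace.single k 1]
        + iteratedFDeriv ℝ 2 φ z
            ![Complex.I • EuclideanSpace.single j (1 : ℂ),
              Complex.I • EuclideanSpace.single k 1] : ℝ) : ℂ)
      + Complex.I *
        ((iteratedFDeriv ℝ 2 φ z
            ![Complex.I • EuclideanSpace.single j (1 : ℂ), EuclideanSpace.single k 1]
          - iteratedFDeriv ℝ 2 φ z
              ![EuclideanSpace.single j (1 : ℂ),
                Complex.I • EuclideanSpace.single k 1] : ℝ) : ℂ))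

/-- The Monge-Ampère measure `(dd^c φ)ⁿ` of a `C²` function, normalized so that
`(dd^c log|z|)ⁿ = δ₀`: it has density `(n!·2ⁿ/πⁿ)·det(∂²φ/∂z_j∂z̄_k)` with respect
to Lebesgue measure. -/
def smoothMA {n : ℕ} (φ : Cn n → ℝ) : Measure (Cn n) :=
  volume.withDensity fun z =>
    ENNReal.ofReal (((Nat.factorial n : ℝ) * 2 ^ n / Real.pi ^ n) *
      (Matrix.det (Matrix.of (cHessEntry φ z))).re)

/-- `μ` is the Monge-Ampère measure `(dd^c φ)ⁿ` of the plurisubharmonic function `φ`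
on `Ω`: `μ` is the weak limit on `Ω` of the Monge-Ampère measures of some decreasing
sequence of smooth plurisubharmonic functions converging pointwise to `φ` on `Ω`. -/
def IsMAMeasure {n : ℕ} (Ω : Set (Cn n)) (φ : Cn n → EReal) (μ : Measure (Cn n)) : Prop :=
  ∃ φk : ℕ → Cn n → ℝ,
    (∀ k, ContDiff ℝ 2 (φk k)) ∧
    (∀ k, PshOn (fun z => ((φk k z : ℝ) : EReal)) Ω) ∧
    (∀ z ∈ Ω, Antitone fun k => φk k z) ∧
    (∀ z ∈ Ω, Tendsto (fun k => ((φk k z : ℝ) : EReal)) atTop (𝓝 (φ z))) ∧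
    ∀ f : Cn n → ℝ, Continuous f → HasCompactSupport f → tsupport f ⊆ Ω →
      Tendsto (fun k => ∫ z, f z ∂(smoothMA (φk k))) atTop (𝓝 (∫ z, f z ∂μ))

/-- The weight `e^{-2c·φ(z)}` as a value in `[0,∞]`, equal to `∞` at poles of `φ`. -/
def expw (c : ℝ) (x : EReal) : ENNReal :=
  if x = ⊥ then ⊤ else ENNReal.ofReal (Real.exp (-2 * c * x.toReal))

/-- The complex singularity exponent `c_K(φ)`: the supremum of the `c ≥ 0` such that
`e^{-2cφ}` is integrable on a neighborhood of `K`. -/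
def cse {n : ℕ} (φ : Cn n → EReal) (K : Set (Cn n)) : ENNReal :=
  sSup {c : ENNReal | ∃ r : ℝ, 0 ≤ r ∧ c = ENNReal.ofReal r ∧
    ∃ U, IsOpen U ∧ K ⊆ U ∧ ∫⁻ z in U, expw r (φ z) < ⊤}


lemma vol_ball_lt_top {n : ℕ} (x : Cn n) : volume (Metric.ball x 1) < ⊤ := by
  have h1 : (MeasurableEquiv.toLp 2 (Fin n → ℂ)) ⁻¹' Metric.ball x 1 ⊆
      Set.univ.pi fun i => Metric.ball (x i) 1 := by
    intro y hy i _
    simp only [Metric.mem_ball] at hy ⊢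
    calc dist (y i) (x i) ≤ dist (WithLp.toLp 2 y : Cn n) x := by
          rw [EuclideanSpace.dist_eq]
          rw [show dist (y i) (x i) = Real.sqrt (dist (y i) (x i) ^ 2) by
            rw [Real.sqrt_sq dist_nonneg]]
          apply Real.sqrt_le_sqrt
          exact Finset.single_le_sum (f := fun j => dist (y j) (x j) ^ 2)
            (fun j _ => sq_nonneg _) (Finset.mem_univ i)
      _ < 1 := hy
  calc volume (Metric.ball x 1)
        = (Measure.pi fun _ : Fin n => (volume : Measure ℂ))
            ((MeasurableEquiv.toLp 2 (Fin n → ℂ)) ⁻¹' Metric.ball x 1) := by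
          rw [show (volume : Measure (Cn n)) = Measure.map (MeasurableEquiv.toLp 2 (Fin n → ℂ))
            (Measure.pi fun _ : Fin n => (volume : Measure ℂ)) from rfl,
            MeasurableEquiv.map_apply]
    _ ≤ (Measure.pi fun _ : Fin n => (volume : Measure ℂ))
          (Set.univ.pi fun i => Metric.ball (x i) 1) :=
        measure_mono h1
    _ = ∏ i, volume (Metric.ball (x i) 1) := by
        rw [Measure.pi_pi]
    _ < ⊤ := WithTop.prod_lt_top (fun i _ => measure_ball_lt_top)

lemma expw_le {r r' : ℝ} (hr : 0 ≤ r) (hrr : r ≤ r') (x : EReal) :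
    expw r x ≤ 1 + expw r' x := by
  unfold expw
  by_cases hx : x = ⊥
  · simp [hx]
  · simp only [if_neg hx]
    set t := x.toReal with ht
    rcases le_or_gt 0 t with htp | htn
    · calc ENNReal.ofReal (Real.exp (-2 * r * t)) ≤ 1 := by
            rw [show (1 : ENNReal) = ENNReal.ofReal 1 by simp]
            exact ENNReal.ofReal_le_ofReal (Real.exp_le_one_iff.2 (by nlinarith))
        _ ≤ 1 + ENNReal.ofReal (Real.exp (-2 * r' * t)) := le_self_add
    · calc ENNReal.ofReal (Real.exp (-2 * r * t))
          ≤ ENNReal.ofReal (Real.exp (-2 * r' * t)) :=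
            ENNReal.ofReal_le_ofReal (Real.exp_le_exp.2 (by nlinarith))
        _ ≤ 1 + ENNReal.ofReal (Real.exp (-2 * r' * t)) := le_add_self

lemma cse_mono {n : ℕ} (φ : Cn n → EReal) {K K' : Set (Cn n)} (h : K ⊆ K') :
    cse φ K' ≤ cse φ K := by
  apply sSup_le_sSup
  rintro c ⟨r, hr, hc, U, hUo, hU, hint⟩
  exact ⟨r, hr, hc, U, hUo, h.trans hU, hint⟩

lemma cse_key {n : ℕ} (φ : Cn n → EReal) (K : Set (Cn n)) (hK : IsCompact K)
    (r : ℝ) (hr : 0 ≤ r)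
    (h : ∀ z ∈ K, ∃ r', r ≤ r' ∧ ∃ U, IsOpen U ∧ z ∈ U ∧
      ∫⁻ w in U, expw r' (φ w) < ⊤) :
    ENNReal.ofReal r ≤ cse φ K := by
  choose! r' hr' U hUo hzU hint using h
  set W : Cn n → Set (Cn n) := fun z => U z ∩ Metric.ball z 1 with hW
  obtain ⟨t, htK, htc⟩ := hK.elim_nhds_subcover W (fun z hz =>
    ((hUo z hz).inter Metric.isOpen_ball).mem_nhds ⟨hzU z hz, Metric.mem_ball_self one_pos⟩)
  apply le_sSup
  refine ⟨r, hr, rfl, ⋃ x ∈ t, W x,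
    isOpen_biUnion (fun x hx => (hUo x (htK x hx)).inter Metric.isOpen_ball), htc, ?_⟩
  have hset : (⋃ x ∈ t, W x) = ⋃ x : {x // x ∈ t}, W x := by ext w; simp
  rw [hset]
  refine lt_of_le_of_lt (lintegral_iUnion_le _ _) ?_
  rw [tsum_fintype]
  refine ENNReal.sum_lt_top.2 (fun x _ => ?_)
  have hxK : (x : Cn n) ∈ K := htK x x.2
  calc ∫⁻ w in W x, expw r (φ w)
      ≤ ∫⁻ w in W x, (1 + expw (r' x) (φ w)) :=
        lintegral_mono (fun w => expw_le hr (hr' x hxK) _)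
    _ = (∫⁻ _ in W x, (1 : ENNReal)) + ∫⁻ w in W x, expw (r' x) (φ w) :=
        lintegral_add_left measurable_const _
    _ = volume (W x) + ∫⁻ w in W x, expw (r' x) (φ w) := by rw [setLIntegral_one]
    _ < ⊤ := by
        refine ENNReal.add_lt_top.2 ⟨?_, ?_⟩
        · exact lt_of_le_of_lt (measure_mono Set.inter_subset_right) (vol_ball_lt_top _)
        · exact lt_of_le_of_lt (lintegral_mono_set Set.inter_subset_left) (hint x hxK)

/-- [DK00]. For a psh function `φ` on `Ω` and a compact `K ⊆ Ω`:
`c_K(φ) = inf_{z ∈ K} c_{{z}}(φ)`, the map `z ↦ c_{{z}}(φ)` is lower semicontinuous,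
and in particular if `c_K(φ) ≤ 1` there is `z₀ ∈ K` with `c_{{z₀}}(φ) ≤ 1`. -/
theorem cse_eq_iInf (n : ℕ) (hn : 0 < n) (Ω K : Set (Cn n)) (hΩ : IsOpen Ω)
    (hK : IsCompact K) (hKΩ : K ⊆ Ω) (φ : Cn n → EReal) (hφ : PshOn φ Ω) :
    cse φ K = (⨅ z ∈ K, cse φ {z}) ∧
    LowerSemicontinuousOn (fun z => cse φ {z}) Ω ∧
    (cse φ K ≤ 1 → ∃ z₀ ∈ K, cse φ {z₀} ≤ 1) := by
  have heq : cse φ K = ⨅ z ∈ K, cse φ {z} := by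
    apply le_antisymm
    · exact le_iInf₂ fun z hz => cse_mono φ (Set.singleton_subset_iff.2 hz)
    · by_contra hlt
      push_neg at hlt
      obtain ⟨c, hc1, hc2⟩ := exists_between hlt
      have hct : c ≠ ⊤ := (lt_of_lt_of_le hc2 le_top).ne
      set r := c.toReal with hrdef
      have hr0 : (0 : ℝ) ≤ r := ENNReal.toReal_nonneg
      have hcr : c = ENNReal.ofReal r := (ENNReal.ofReal_toReal hct).symm
      have key : ENNReal.ofReal r ≤ cse φ K := by
        apply cse_key φ K hK r hr0
        intro z hz
        have h2 : c < cse φ {z} := hc2.trans_le (iInf₂_le z hz)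
        obtain ⟨s, hs, hcs⟩ := lt_sSup_iff.1 h2
        obtain ⟨r', hr', rfl, U, hUo, hU, hint⟩ := hs
        refine ⟨r', ?_, U, hUo, Set.singleton_subset_iff.1 hU, hint⟩
        exact ((ENNReal.ofReal_lt_ofReal_iff_of_nonneg hr0).1 (hcr ▸ hcs)).le
      exact absurd (hcr ▸ key) (not_le.2 hc1)
  refine ⟨heq, ?_, ?_⟩
  · intro z hz y hy
    obtain ⟨s, hs, hys⟩ := lt_sSup_iff.1 hy
    obtain ⟨r', hr', rfl, U, hUo, hU, hint⟩ := hs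
    have hzU : z ∈ U := Set.singleton_subset_iff.1 hU
    filter_upwards [mem_nhdsWithin_of_mem_nhds (hUo.mem_nhds hzU)] with w hw
    exact hys.trans_le (le_sSup ⟨r', hr', rfl, U, hUo, Set.singleton_subset_iff.2 hw, hint⟩)
  · intro h1
    by_contra hno
    push_neg at hno
    rcases K.eq_empty_or_nonempty with hKe | hKne
    · have h2 : (ENNReal.ofReal 2) ≤ cse φ K := by
        apply le_sSup
        refine ⟨2, by norm_num, rfl, ∅, isOpen_empty, by simp [hKe], ?_⟩
        rw [Measure.restrict_empty, lintegral_zero_measure]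
        exact ENNReal.zero_lt_top
      have h3 : (ENNReal.ofReal 2) ≤ 1 := h2.trans h1
      rw [show (1 : ENNReal) = ENNReal.ofReal 1 by simp] at h3
      have := (ENNReal.ofReal_le_ofReal_iff (by norm_num)).1 h3
      linarith
    · have h' : ∀ z ∈ K, ∃ r', 1 < r' ∧ ∃ U, IsOpen U ∧ z ∈ U ∧
          ∫⁻ w in U, expw r' (φ w) < ⊤ := by
        intro z hz
        obtain ⟨s, hs, hys⟩ := lt_sSup_iff.1 (hno z hz)
        obtain ⟨r', hr', rfl, U, hUo, hU, hint⟩ := hs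
        refine ⟨r', ?_, U, hUo, Set.singleton_subset_iff.1 hU, hint⟩
        rw [show (1 : ENNReal) = ENNReal.ofReal 1 by simp] at hys
        exact (ENNReal.ofReal_lt_ofReal_iff_of_nonneg (by norm_num)).1 hys
      choose! r' hr1 U hUo hzU hint using h'
      obtain ⟨t, htK, htc⟩ := hK.elim_nhds_subcover U
        (fun z hz => (hUo z hz).mem_nhds (hzU z hz))
      have htne : t.Nonempty := by
        obtain ⟨z, hz⟩ := hKne
        rcases Set.mem_iUnion₂.1 (htc hz) with ⟨x, hx, _⟩
        exact ⟨x, hx⟩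
      set r := t.inf' htne r' with hrdef
      have hr1' : 1 < r := (Finset.lt_inf'_iff htne).2 fun x hx => hr1 x (htK x hx)
      have hkey : ENNReal.ofReal r ≤ cse φ K := by
        apply cse_key φ K hK r (by linarith)
        intro z hz
        rcases Set.mem_iUnion₂.1 (htc hz) with ⟨x, hx, hmem⟩
        exact ⟨r' x, Finset.inf'_le _ hx, U x, hUo x (htK x hx), hmem, hint x (htK x hx)⟩
      have h3 : ENNReal.ofReal r ≤ 1 := hkey.trans h1
      rw [show (1 : ENNReal) = ENNReal.ofReal 1 by simp] at h3
      have := (ENNReal.ofReal_le_ofReal_iff (by norm_num)).1 h3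
      linarith
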